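/- Let H: ℝ^n × ℝ^n → ℝ be a smooth Hamiltonian, W: ℝ^n → ℝ smooth with γ = dW, and suppose d(H∘γ) = 0, i.e. q ↦ H(q,γ(q)) is constant. Define X_H^γ(q) by (X_H^γ)^i(q) = ∂H/∂p_i(q,γ(q)). If c: I → ℝ^n is an integral curve of X_H^γ, i.e. ċ^i(t) = ∂H/∂p_i(c(t), γ(c(t))), then t ↦ (c(t), γ(c(t))) is an integral curve of the Hamiltonian vector field X_H, i.e. it satisfies Hamilton's equations dq^i/dt = ∂H/∂p_i and dp_i/dt = −∂H/∂q^i along the curve. -/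

import Mathlib

section Aux

variable {n : ℕ}

/-- A continuous linear functional on `Fin n → ℝ` is the sum of its coordinate values. -/
lemma clm_eq_sum (L : (Fin n → ℝ) →L[ℝ] ℝ) (v : Fin n → ℝ) :
    L v = ∑ j, v j * L (Pi.single j 1) := by
  have hv : v = ∑ j, v j • (Pi.single j 1 : Fin n → ℝ) := by
    ext k
    simp [Pi.single_apply, Finset.sum_ite_eq', mul_comm]
  conv_lhs => rw [hv]
  simp [smul_eq_mul]

end Aux

/-!
Lifting statement of the geometric Hamilton–Jacobi theorem on `T*ℝⁿ ≅ ℝⁿ × ℝⁿ` with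
coordinates `(qⁱ, pᵢ)`: if `γ = dW` satisfies `d(H∘γ) = 0` and `c : I → ℝⁿ` is an integral
curve of the projected vector field `X_H^γ`, i.e. `ċⁱ(t) = (∂H/∂pᵢ)(c(t), γ(c(t)))`, then
`t ↦ (c(t), γ(c(t)))` is an integral curve of the Hamiltonian vector field
`X_H(q,p) = (∂H/∂pᵢ, −∂H/∂qⁱ)`, i.e. it satisfies Hamilton's equations
`dqⁱ/dt = ∂H/∂pᵢ` and `dpᵢ/dt = −∂H/∂qⁱ` along the curve. -/
theorem hamilton_jacobi_lifts_integral_curves (n : ℕ)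
    (H : (Fin n → ℝ) × (Fin n → ℝ) → ℝ) (hH : ContDiff ℝ (⊤ : ℕ∞) H)
    (W : (Fin n → ℝ) → ℝ) (hW : ContDiff ℝ (⊤ : ℕ∞) W)
    (γ : (Fin n → ℝ) → Fin n → ℝ)
    (hγ : ∀ (q : Fin n → ℝ) (i : Fin n), γ q i = fderiv ℝ W q (Pi.single i 1))
    -- `d(H ∘ γ) = 0`, i.e. `q ↦ H(q, γ(q))` is constant
    (hHJ : ∀ q : Fin n → ℝ, fderiv ℝ (fun y => H (y, γ y)) q = 0)
    (I : Set ℝ) (hI : IsOpen I) (c : ℝ → Fin n → ℝ)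
    -- `c` is an integral curve of `X_H^γ`:  `ċⁱ(t) = (∂H/∂pᵢ)(c(t), γ(c(t)))`
    (hc : ∀ t ∈ I, HasDerivAt c
      (fun i => fderiv ℝ H (c t, γ (c t)) (0, Pi.single i 1)) t) :
    -- then `t ↦ (c(t), γ(c(t)))` solves Hamilton's equations
    ∀ t ∈ I, HasDerivAt (fun s : ℝ => ((c s, γ (c s)) : (Fin n → ℝ) × (Fin n → ℝ)))
      ((fun i => fderiv ℝ H (c t, γ (c t)) (0, Pi.single i 1)),
       (fun i => -fderiv ℝ H (c t, γ (c t)) (Pi.single i 1, 0))) t := by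
  intro t ht
  set e : Fin n → (Fin n → ℝ) := fun i => Pi.single i 1 with he
  set Φ : ((Fin n → ℝ) →L[ℝ] ℝ) →L[ℝ] (Fin n → ℝ) :=
    ContinuousLinearMap.pi (fun i => ContinuousLinearMap.apply ℝ ℝ (e i)) with hΦ
  have hγeq : γ = fun q => Φ (fderiv ℝ W q) := by
    funext q i
    simp [hΦ, hγ q i, he, ContinuousLinearMap.pi_apply, ContinuousLinearMap.apply_apply]
  have hdW : ∀ q : Fin n → ℝ, HasFDerivAt (fderiv ℝ W)
      (fderiv ℝ (fderiv ℝ W) q) q := by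
    intro q
    refine (((hW.fderiv_right (m := ((⊤ : ℕ∞) : WithTop ℕ∞)) (le_of_eq ?_)).differentiable
      (by simp)) q).hasFDerivAt
    rfl
  have hWd : ∀ y : Fin n → ℝ, HasFDerivAt W (fderiv ℝ W y) y :=
    fun y => (hW.differentiable (by simp) y).hasFDerivAt
  set q : Fin n → ℝ := c t with hq
  set f'' : (Fin n → ℝ) →L[ℝ] (Fin n → ℝ) →L[ℝ] ℝ := fderiv ℝ (fderiv ℝ W) q with hf''
  have hsymm : ∀ v w : Fin n → ℝ, f'' v w = f'' w v :=
    fun v w => second_derivative_symmetric hWd (hdW q) v w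
  have hγd : ∀ y : Fin n → ℝ, HasFDerivAt γ (Φ.comp (fderiv ℝ (fderiv ℝ W) y)) y := by
    intro y
    rw [hγeq]
    exact Φ.hasFDerivAt.comp y (hdW y)
  set x : (Fin n → ℝ) × (Fin n → ℝ) := (q, γ q) with hx
  set DH : ((Fin n → ℝ) × (Fin n → ℝ)) →L[ℝ] ℝ := fderiv ℝ H x with hDH
  have hHd : HasFDerivAt H DH x := (hH.differentiable (by simp) x).hasFDerivAt
  have hcomp : HasFDerivAt (fun y => H (y, γ y))
      (DH.comp ((ContinuousLinearMap.id ℝ (Fin n → ℝ)).prod (Φ.comp f''))) q :=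
    hHd.comp q ((hasFDerivAt_id q).prodMk (hγd q))
  have hzero : ∀ v : Fin n → ℝ, DH (v, (Φ.comp f'') v) = 0 := by
    intro v
    have h := hcomp.fderiv
    rw [hHJ q] at h
    have := congrArg (fun L => L v) h.symm
    simpa using this
  set v : Fin n → ℝ := fun i => DH (0, e i) with hv
  have hcv : HasDerivAt c v t := hc t ht
  have hγc : HasDerivAt (fun s => γ (c s)) ((Φ.comp f'') v) t :=
    (hγd q).comp_hasDerivAt t hcv
  have hΦapp : ∀ (u : Fin n → ℝ) (j : Fin n), (Φ.comp f'') u j = f'' u (e j) := by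
    intro u j
    simp [hΦ, ContinuousLinearMap.pi_apply, ContinuousLinearMap.apply_apply]
  have key : (Φ.comp f'') v = fun i => -DH (e i, 0) := by
    funext i
    have h1 : DH (e i, 0) = -DH (0, (Φ.comp f'') (e i)) := by
      have h0 := hzero (e i)
      have h2 : DH (e i, (Φ.comp f'') (e i))
          = DH (e i, 0) + DH (0, (Φ.comp f'') (e i)) := by
        rw [← map_add]; simp
      rw [h2] at h0
      linarith
    have lhs : (Φ.comp f'') v i = ∑ j, v j * f'' (e i) (e j) := by
      rw [hΦapp v i, hsymm v (e i), clm_eq_sum (f'' (e i)) v]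
    have rhs : DH (0, (Φ.comp f'') (e i)) = ∑ j, f'' (e i) (e j) * DH (0, e j) := by
      have h3 : DH (0, (Φ.comp f'') (e i))
          = (DH.comp (ContinuousLinearMap.inr ℝ (Fin n → ℝ) (Fin n → ℝ)))
              ((Φ.comp f'') (e i)) := by simp
      rw [h3, clm_eq_sum]
      refine Finset.sum_congr rfl fun j _ => ?_
      rw [hΦapp (e i) j]
      simp [he]
    rw [lhs, h1, rhs, neg_neg]
    refine Finset.sum_congr rfl fun j _ => ?_
    have hvj : v j = DH (0, e j) := by rw [hv]
    rw [hvj, mul_comm]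
  rw [key] at hγc
  exact hcv.prodMk hγc
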